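/- Let G be a graph in the class F (every minimum vertex cover of G containing all cut vertices induces a connected subgraph), with at least two vertices, and let X be the set of cut vertices of G. Then evc(G) = mvc(G) if and only if for every vertex v ∈ V(G) \ X there exists a minimum vertex cover S_v of G with X ∪ {v} ⊆ S_v. -/

import Mathlib

namespace EVC

open SimpleGraph

variable {V : Type*}

/-- `S` is a vertex cover of `G`. -/
def IsVC (G : SimpleGraph V) (S : Set V) : Prop :=
  ∀ ⦃u v : V⦄, G.Adj u v → u ∈ S ∨ v ∈ S

/-- The minimum vertex cover number of `G`. -/
noncomputable def mvc (G : SimpleGraph V) : ℕ :=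
  sInf {k | ∃ S : Set V, IsVC G S ∧ S.ncard = k}

/-- The minimum size of a vertex cover of `G` containing all vertices of `U`. -/
noncomputable def mvcOn (G : SimpleGraph V) (U : Set V) : ℕ :=
  sInf {k | ∃ S : Set V, IsVC G S ∧ U ⊆ S ∧ S.ncard = k}

/-- Configuration `S'` is obtained from configuration `S` by a legal move of the guards
defending an attack on the edge `uv`: each guard stays or moves to an adjacent vertex
(at most one guard per vertex), and some guard moves across the attacked edge `uv`. -/
def Defends (G : SimpleGraph V) (S S' : Set V) (u v : V) : Prop :=
  ∃ f : V → V, Set.BijOn f S S' ∧ (∀ w ∈ S, f w = w ∨ G.Adj w (f w)) ∧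
    ((u ∈ S ∧ f u = v) ∨ (v ∈ S ∧ f v = u))

/-- `C` is an eternal vertex cover class of `G` with `k` guards, each configuration being a
vertex cover of size `k` containing `U`: from each configuration, every attack on an edge
can be defended by a legal move to another configuration in `C`. -/
def IsEvcClassOn (G : SimpleGraph V) (U : Set V) (k : ℕ) (C : Set (Set V)) : Prop :=
  C.Nonempty ∧ (∀ S ∈ C, IsVC G S ∧ U ⊆ S ∧ S.ncard = k) ∧
    ∀ S ∈ C, ∀ u v : V, G.Adj u v → ∃ S' ∈ C, Defends G S S' u v

/-- An eternal vertex cover class with no constraint on occupied vertices. -/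
def IsEvcClass (G : SimpleGraph V) (k : ℕ) (C : Set (Set V)) : Prop :=
  IsEvcClassOn G ∅ k C

/-- `evc_U(G)` : the minimum `k` admitting an eternal vertex cover class all of whose
configurations contain `U`. -/
noncomputable def evcOn (G : SimpleGraph V) (U : Set V) : ℕ :=
  sInf {k | ∃ C : Set (Set V), IsEvcClassOn G U k C}

/-- The eternal vertex cover number of `G`. -/
noncomputable def evc (G : SimpleGraph V) : ℕ := evcOn G ∅

/-- `x` is a cut vertex of the connected graph `G`. -/
def IsCutVertex (G : SimpleGraph V) (x : V) : Prop :=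
  G.Connected ∧ ¬ (G.induce {v : V | v ≠ x}).Connected

/-- The set of cut vertices of `G`. -/
def cutVertices (G : SimpleGraph V) : Set V := {x | IsCutVertex G x}

/-- `G` is locally connected: every open neighborhood induces a connected subgraph. -/
def LocallyConnected (G : SimpleGraph V) : Prop :=
  ∀ v : V, (G.induce (G.neighborSet v)).Connected

end EVC


section Aux

open EVC SimpleGraph

variable {V : Type*}

namespace EVCAux

lemma isVC_univ (G : SimpleGraph V) : IsVC G Set.univ := fun u _ _ => Or.inl (Set.mem_univ u)

lemma mvc_le_ncard (G : SimpleGraph V) {S : Set V} (hS : IsVC G S) : mvc G ≤ S.ncard :=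
  Nat.sInf_le ⟨S, hS, rfl⟩

/-- Lift a walk avoiding the complement of `A` to reachability in the induced graph. -/
lemma reachable_induce_of_walk {G : SimpleGraph V} {A : Set V} :
    ∀ {a b : V} (p : G.Walk a b), (∀ c ∈ p.support, c ∈ A) →
      ∀ (ha : a ∈ A) (hb : b ∈ A), (G.induce A).Reachable ⟨a, ha⟩ ⟨b, hb⟩ := by
  intro a b p
  induction p with
  | nil => intro _ ha hb; exact Reachable.refl _
  | @cons a c b h q ih =>
      intro hp ha hb
      have hc : c ∈ A := hp c (by simp [SimpleGraph.Walk.support_cons])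
      have h1 : (G.induce A).Adj ⟨a, ha⟩ ⟨c, hc⟩ := h
      exact h1.reachable.trans (ih (fun d hd => hp d (by simp [SimpleGraph.Walk.support_cons, hd])) hc hb)

/-- From a walk `b → x` with `b ≠ x`, extract a neighbor `w` of `x` together with a walk
from `b` to `w` avoiding `x`. -/
lemma exists_adj_avoid {G : SimpleGraph V} {x : V} :
    ∀ {b : V} (_ : G.Walk b x), b ≠ x →
      ∃ w, G.Adj x w ∧ ∃ q : G.Walk b w, ∀ c ∈ q.support, c ≠ x := by
  intro b p
  induction p with
  | nil => intro h; exact absurd rfl h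
  | @cons b c x h q ih =>
      intro hb
      by_cases hc : c = x
      · subst hc
        exact ⟨b, h.symm, Walk.nil, by simpa using hb⟩
      · obtain ⟨w, hxw, r, hr⟩ := ih hc
        refine ⟨w, hxw, Walk.cons h r, ?_⟩
        intro d hd
        rw [Walk.support_cons, List.mem_cons] at hd
        rcases hd with rfl | hd
        · exact hb
        · exact hr d hd

/-- A walk from inside `A` to outside `A` crosses the boundary of `A`. -/
lemma exists_cross {W : Type*} {H : SimpleGraph W} {A : Set W} :
    ∀ {a b : W} (_ : H.Walk a b), a ∈ A → b ∉ A → ∃ c d, H.Adj c d ∧ c ∈ A ∧ d ∉ A := by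
  intro a b p
  induction p with
  | nil => intro ha hb; exact absurd ha hb
  | @cons a c _ h q ih =>
      intro ha hb
      by_cases hc : c ∈ A
      · exact ih hc hb
      · exact ⟨a, c, h, ha, hc⟩

lemma exists_cross_of_induce_connected {G : SimpleGraph V} {S A : Set V}
    (hSconn : (G.induce S).Connected) (hAS : A ⊆ S) (hAne : A.Nonempty)
    (hSAne : (S \ A).Nonempty) :
    ∃ p q, G.Adj p q ∧ p ∈ A ∧ q ∈ S \ A := by
  obtain ⟨a, haA⟩ := hAne
  obtain ⟨s, hsS, hsA⟩ := hSAne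
  obtain ⟨p⟩ := hSconn.preconnected ⟨a, hAS haA⟩ ⟨s, hsS⟩
  obtain ⟨c, d, hcd, hcA, hdA⟩ :=
    exists_cross (A := {z : ↥S | (z : V) ∈ A}) p haA hsA
  exact ⟨c.1, d.1, hcd, hcA, d.2, hdA⟩

lemma exists_adj_self [Nontrivial V] {G : SimpleGraph V} (hconn : G.Connected) (v : V) :
    ∃ u, G.Adj u v := by
  obtain ⟨w, hw⟩ := exists_ne v
  obtain ⟨q⟩ := hconn.preconnected v w
  cases q with
  | nil => exact absurd rfl hw
  | cons h _ => exact ⟨_, h.symm⟩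

end EVCAux

end Aux
section Cut

open EVC SimpleGraph

variable {V : Type*}

namespace EVCAux

lemma side_attack [Finite V] {G : SimpleGraph V} {C : Set (Set V)}
    (hC2 : ∀ S ∈ C, IsVC G S)
    (hC3 : ∀ S ∈ C, ∀ u v : V, G.Adj u v → ∃ S' ∈ C, Defends G S S' u v)
    {S : Set V} (hS : S ∈ C) {P : Set V} {x w₀ : V}
    (hxP : x ∉ P) (hxS : x ∉ S)
    (hclosed : ∀ s w, G.Adj s w → w ∈ P → s = x ∨ s ∈ P)
    (hw₀ : G.Adj x w₀) (hw₀P : w₀ ∈ P)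
    (hmin : ∀ D, D ⊆ P → (∀ a b, G.Adj a b → a ∈ P → b ∈ P → a ∈ D ∨ b ∈ D) →
      (S ∩ P).ncard ≤ D.ncard) : False := by
  have hw₀S : w₀ ∈ S := (hC2 S hS hw₀).resolve_left hxS
  obtain ⟨S', hS', f, hbij, hmov, hcross⟩ := hC3 S hS x w₀ hw₀
  have hfw₀ : f w₀ = x := by
    rcases hcross with ⟨hxS', _⟩ | ⟨_, h⟩
    · exact absurd hxS' hxS
    · exact h
  have himg : f '' S = S' := hbij.image_eq
  have hsub : S' ∩ P ⊆ f '' ((S ∩ P) \ {w₀}) := by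
    rintro y ⟨hyS', hyP⟩
    rw [← himg] at hyS'
    obtain ⟨s, hsS, rfl⟩ := hyS'
    have hsP : s ∈ P := by
      rcases hmov s hsS with he | hadj
      · rwa [he] at hyP
      · rcases hclosed s (f s) hadj hyP with rfl | h
        · exact absurd hsS hxS
        · exact h
    have hsw : s ≠ w₀ := by
      rintro rfl
      rw [hfw₀] at hyP
      exact hxP hyP
    exact ⟨s, ⟨⟨hsS, hsP⟩, hsw⟩, rfl⟩
  have h1 : (S' ∩ P).ncard ≤ ((S ∩ P) \ {w₀}).ncard :=
    le_trans (Set.ncard_le_ncard hsub) (Set.ncard_image_le)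
  have h2 : ((S ∩ P) \ {w₀}).ncard < (S ∩ P).ncard :=
    Set.ncard_diff_singleton_lt_of_mem ⟨hw₀S, hw₀P⟩
  have h3 : (S ∩ P).ncard ≤ (S' ∩ P).ncard := by
    apply hmin _ Set.inter_subset_right
    intro a b hadj ha hb
    rcases hC2 S' hS' hadj with h | h
    · exact Or.inl ⟨h, ha⟩
    · exact Or.inr ⟨h, hb⟩
  omega

/-- In an eternal vertex cover class whose configurations have at most `mvc G` guards,
every configuration contains every cut vertex. -/
lemma cut_subset_config [Finite V] [Nontrivial V] {G : SimpleGraph V}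
    (hconn : G.Connected) {C : Set (Set V)}
    (hC2 : ∀ S ∈ C, IsVC G S)
    (hC3 : ∀ S ∈ C, ∀ u v : V, G.Adj u v → ∃ S' ∈ C, Defends G S S' u v)
    {S : Set V} (hS : S ∈ C) (hcard : S.ncard ≤ mvc G) :
    cutVertices G ⊆ S := by
  intro x hx
  by_contra hxS
  obtain ⟨-, hnc⟩ := hx
  obtain ⟨y, hy⟩ := exists_ne x
  have hpre : ¬(G.induce {v : V | v ≠ x}).Preconnected := by
    intro h
    exact hnc ((SimpleGraph.connected_iff _).mpr ⟨h, ⟨⟨y, hy⟩⟩⟩)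
  have hex : ∃ A B : ↥{v : V | v ≠ x}, ¬(G.induce {v : V | v ≠ x}).Reachable A B := by
    by_contra h
    push_neg at h
    exact hpre h
  obtain ⟨⟨a, ha⟩, ⟨b, hb⟩, hAB⟩ := hex
  set P : Set V := {w | w ≠ x ∧ ∃ q : G.Walk a w, ∀ c ∈ q.support, c ≠ x} with hPdef
  have hxP : x ∉ P := fun h => h.1 rfl
  have hbP : b ∉ P := by
    rintro ⟨-, q, hq⟩
    exact hAB (reachable_induce_of_walk q hq ha hb)
  have hPc : ∀ w ∈ P, ∀ r, G.Adj w r → r ≠ x → r ∈ P := by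
    rintro w ⟨hwx, q, hq⟩ r hadj hrx
    refine ⟨hrx, q.concat hadj, ?_⟩
    intro c hc
    rw [Walk.support_concat, List.mem_append] at hc
    rcases hc with hc | hc
    · exact hq c hc
    · rw [List.mem_singleton] at hc
      exact hc ▸ hrx
  have hclosedP : ∀ s w, G.Adj s w → w ∈ P → s = x ∨ s ∈ P := fun s w hadj hw =>
    or_iff_not_imp_left.mpr (fun hsx => hPc w hw s hadj.symm hsx)
  set Q : Set V := {w | w ≠ x ∧ w ∉ P} with hQdef
  have hxQ : x ∉ Q := fun h => h.1 rfl
  have hclosedQ : ∀ s w, G.Adj s w → w ∈ Q → s = x ∨ s ∈ Q := by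
    intro s w hadj hwQ
    by_cases hsx : s = x
    · exact Or.inl hsx
    · exact Or.inr ⟨hsx, fun hsP => hwQ.2 (hPc s hsP w hadj hwQ.1)⟩
  -- x has a neighbor in P
  obtain ⟨p⟩ := hconn.preconnected a x
  obtain ⟨wP, hxwP, qP, hqP⟩ := exists_adj_avoid p ha
  have hwPP : wP ∈ P := ⟨hxwP.ne', qP, hqP⟩
  -- x has a neighbor in Q
  obtain ⟨p'⟩ := hconn.preconnected b x
  obtain ⟨wQ, hxwQ, qQ, hqQ⟩ := exists_adj_avoid p' hb
  have hwQQ : wQ ∈ Q := by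
    refine ⟨hxwQ.ne', fun hwQP => ?_⟩
    obtain ⟨-, r, hr⟩ := hwQP
    refine hbP ⟨hb, r.append qQ.reverse, ?_⟩
    intro c hc
    rw [Walk.mem_support_append_iff] at hc
    rcases hc with hc | hc
    · exact hr c hc
    · rw [Walk.support_reverse, List.mem_reverse] at hc
      exact hqQ c hc
  have hPQ : ∀ w, w ≠ x → w ∈ P ∨ w ∈ Q := fun w hw =>
    or_iff_not_imp_left.mpr (fun h => ⟨hw, h⟩)
  have hSsplit : S = (S ∩ P) ∪ (S ∩ Q) := by
    ext s
    constructor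
    · intro hsS
      have hsx : s ≠ x := fun h => hxS (h ▸ hsS)
      rcases hPQ s hsx with h | h
      · exact Or.inl ⟨hsS, h⟩
      · exact Or.inr ⟨hsS, h⟩
    · rintro (⟨h, -⟩ | ⟨h, -⟩) <;> exact h
  have hdisj : Disjoint (S ∩ P) (S ∩ Q) := by
    rw [Set.disjoint_left]
    rintro s ⟨-, hsP⟩ ⟨-, hsQ⟩
    exact hsQ.2 hsP
  have hcardsplit : S.ncard = (S ∩ P).ncard + (S ∩ Q).ncard := by
    conv_lhs => rw [hSsplit]
    exact Set.ncard_union_eq hdisj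
  by_cases hminP : ∀ D, D ⊆ P → (∀ a b, G.Adj a b → a ∈ P → b ∈ P → a ∈ D ∨ b ∈ D) →
      (S ∩ P).ncard ≤ D.ncard
  · exact side_attack hC2 hC3 hS hxP hxS hclosedP hxwP hwPP hminP
  · push_neg at hminP
    obtain ⟨DP, hDPP, hDPcov, hDPlt⟩ := hminP
    have hminQ : ∀ D, D ⊆ Q → (∀ a b, G.Adj a b → a ∈ Q → b ∈ Q → a ∈ D ∨ b ∈ D) →
        (S ∩ Q).ncard ≤ D.ncard := by
      intro D hDQ hDcov
      by_contra hlt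
      push_neg at hlt
      set T : Set V := insert x (DP ∪ D) with hTdef
      have hTvc : IsVC G T := by
        intro p q hpq
        by_cases hpx : p = x
        · exact Or.inl (hpx ▸ Set.mem_insert _ _)
        by_cases hqx : q = x
        · exact Or.inr (hqx ▸ Set.mem_insert _ _)
        rcases hPQ p hpx with hpP | hpQ
        · have hqP : q ∈ P := hPc p hpP q hpq hqx
          rcases hDPcov p q hpq hpP hqP with h | h
          · exact Or.inl (Set.mem_insert_of_mem _ (Set.mem_union_left _ h))
          · exact Or.inr (Set.mem_insert_of_mem _ (Set.mem_union_left _ h))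
        · have hqQ : q ∈ Q := (hclosedQ q p hpq.symm hpQ).resolve_left hqx
          rcases hDcov p q hpq hpQ hqQ with h | h
          · exact Or.inl (Set.mem_insert_of_mem _ (Set.mem_union_right _ h))
          · exact Or.inr (Set.mem_insert_of_mem _ (Set.mem_union_right _ h))
      have h1 : mvc G ≤ T.ncard := mvc_le_ncard G hTvc
      have h2 : T.ncard ≤ (DP ∪ D).ncard + 1 := Set.ncard_insert_le _ _
      have h3 : (DP ∪ D).ncard ≤ DP.ncard + D.ncard := Set.ncard_union_le _ _
      omega
    exact side_attack hC2 hC3 hS hxQ hxS hclosedQ hxwQ hwQQ hminQ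

end EVCAux

end Cut
section Noncut

open EVC SimpleGraph

variable {V : Type*}

namespace EVCAux

lemma exists_noncut [Finite V] [Nontrivial V] {G : SimpleGraph V} (hconn : G.Connected) :
    ∃ v, v ∉ cutVertices G := by
  classical
  have _inst := Fintype.ofFinite V
  obtain ⟨u⟩ := (inferInstance : Nonempty V)
  obtain ⟨v, -, hv⟩ := Finset.exists_max_image Finset.univ (G.dist u) ⟨u, Finset.mem_univ u⟩
  refine ⟨v, fun hcut => ?_⟩
  apply hcut.2
  have huv : u ≠ v := by
    obtain ⟨w, hw⟩ := exists_ne u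
    rintro rfl
    have h0 : G.dist u w = 0 := by
      have := hv w (Finset.mem_univ w)
      rwa [SimpleGraph.dist_self, Nat.le_zero] at this
    rcases SimpleGraph.dist_eq_zero_iff_eq_or_not_reachable.mp h0 with rfl | hr
    · exact hw rfl
    · exact hr (hconn.preconnected u w)
  have key : ∀ (w : V) (hw : w ≠ v),
      (G.induce {z : V | z ≠ v}).Reachable ⟨u, huv⟩ ⟨w, hw⟩ := by
    intro w hw
    obtain ⟨p, hp⟩ := (hconn.preconnected u w).exists_walk_length_eq_dist
    have hvp : v ∉ p.support := by
      intro hvs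
      have h1 : G.dist u v ≤ (p.takeUntil v hvs).length := SimpleGraph.dist_le _
      have h2 : G.dist v w ≤ (p.dropUntil v hvs).length := SimpleGraph.dist_le _
      have hsum : (p.takeUntil v hvs).length + (p.dropUntil v hvs).length = p.length := by
        conv_rhs => rw [← p.take_spec hvs]
        rw [Walk.length_append]
      have hle : G.dist u w ≤ G.dist u v := hv w (Finset.mem_univ w)
      have hvw : G.dist v w = 0 := by omega
      rcases SimpleGraph.dist_eq_zero_iff_eq_or_not_reachable.mp hvw with rfl | hr
      · exact hw rfl
      · exact hr (hconn.preconnected v w)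
    refine reachable_induce_of_walk p (fun c hc => ?_) huv hw
    simp only [Set.mem_setOf_eq]
    rintro rfl
    exact hvp hc
  refine (SimpleGraph.connected_iff _).mpr ⟨?_, ⟨⟨u, huv⟩⟩⟩
  rintro ⟨c, hc⟩ ⟨d, hd⟩
  exact (key c hc).symm.trans (key d hd)

end EVCAux

end Noncut
section Hall

open EVC SimpleGraph

variable {V : Type*}

namespace EVCAux

/-- The key one-step defense lemma: if `S` is a minimum vertex cover inducing a connected
subgraph, `u ∈ S`, `v ∉ S` are adjacent, and there is a minimum vertex cover containing
`X' ∪ {v}`, then there is one, `T`, reachable from `S` in one parallel guard move in which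
the guard at `u` crosses to `v`. -/
lemma exists_defense_move [Finite V] {G : SimpleGraph V} {S T₀ X' : Set V} {u v : V}
    (hSvc : IsVC G S) (hScard : S.ncard = mvc G) (hSconn : (G.induce S).Connected)
    (huv : G.Adj u v) (hu : u ∈ S) (hv : v ∉ S) (hX'S : X' ⊆ S)
    (hT₀ : IsVC G T₀ ∧ T₀.ncard = mvc G ∧ X' ∪ {v} ⊆ T₀) :
    ∃ T, (IsVC G T ∧ T.ncard = mvc G ∧ X' ∪ {v} ⊆ T) ∧
      ∃ f : V → V, Set.BijOn f S T ∧ (∀ w ∈ S, f w = w ∨ G.Adj w (f w)) ∧ f u = v := by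
  classical
  set good : Set V → Prop := fun T => IsVC G T ∧ T.ncard = mvc G ∧ X' ∪ {v} ⊆ T with hgood
  have hNne : {n | ∃ T, good T ∧ (S \ T).ncard = n}.Nonempty := ⟨_, T₀, hT₀, rfl⟩
  obtain ⟨T, hTgood, hTm⟩ := Nat.sInf_mem hNne
  have hmin : ∀ T', good T' → (S \ T).ncard ≤ (S \ T').ncard := by
    intro T' h
    rw [hTm]
    exact Nat.sInf_le ⟨T', h, rfl⟩
  obtain ⟨hTvc, hTcard, hTsub⟩ := hTgood
  have hvT : v ∈ T := hTsub (Set.mem_union_right _ rfl)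
  have hX'T : X' ⊆ T := fun z hz => hTsub (Set.mem_union_left _ hz)
  -- Hall's condition setup
  let ι := {w : V // w ∈ S ∧ w ≠ u}
  let t : ι → Finset V := fun a =>
    (Set.toFinite ((T \ {v}) ∩ {y | a.1 = y ∨ G.Adj a.1 y})).toFinset
  have hmem_t : ∀ (a : ι) (y : V), y ∈ t a ↔ (y ∈ T ∧ y ≠ v) ∧ (a.1 = y ∨ G.Adj a.1 y) := by
    intro a y
    simp [t, Set.Finite.mem_toFinset, Set.mem_diff, Set.mem_setOf_eq]
  have hhall : ∀ s : Finset ι, s.card ≤ (s.biUnion t).card := by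
    intro s
    by_contra hlt
    push_neg at hlt
    set A : Set V := ↑(s.image (fun a : ι => a.1)) with hA
    set B : Set V := ↑(s.biUnion t) with hB
    have hmemA : ∀ y : V, y ∈ A ↔ ∃ a : ι, a ∈ s ∧ a.1 = y := by
      intro y
      simp [hA, Finset.mem_image]
    have hmemB : ∀ y : V, y ∈ B ↔ ∃ a : ι, a ∈ s ∧ y ∈ t a := by
      intro y
      simp [hB, Finset.mem_biUnion]
    have hAcard : A.ncard = s.card := by
      rw [hA, Set.ncard_coe_finset, Finset.card_image_of_injective _ Subtype.val_injective]
    have hBcard : B.ncard = (s.biUnion t).card := by rw [hB, Set.ncard_coe_finset]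
    have hBA : B.ncard < A.ncard := by omega
    have hAS : A ⊆ S := by
      intro y hy
      obtain ⟨a, -, rfl⟩ := (hmemA y).mp hy
      exact a.2.1
    have hAu : u ∉ A := by
      intro hy
      obtain ⟨a, -, ha⟩ := (hmemA u).mp hy
      exact a.2.2 ha
    have hAB : ∀ y ∈ A, y ∈ T → y ∈ B := by
      intro y hy hyT
      obtain ⟨a, has, ha⟩ := (hmemA y).mp hy
      refine (hmemB y).mpr ⟨a, has, (hmem_t a y).mpr ⟨⟨hyT, ?_⟩, Or.inl ha⟩⟩
      rintro rfl
      exact hv (hAS hy)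
    have hABadj : ∀ y ∈ A, ∀ z, G.Adj y z → z ∈ T → z ≠ v → z ∈ B := by
      intro y hy z hadj hzT hzv
      obtain ⟨a, has, ha⟩ := (hmemA y).mp hy
      exact (hmemB z).mpr ⟨a, has, (hmem_t a z).mpr ⟨⟨hzT, hzv⟩, Or.inr (ha ▸ hadj)⟩⟩
    have hBT : B ⊆ T \ {v} := by
      intro y hy
      obtain ⟨a, -, hyt⟩ := (hmemB y).mp hy
      obtain ⟨⟨h1, h2⟩, -⟩ := (hmem_t a y).mp hyt
      exact ⟨h1, h2⟩
    set S₁ : Set V := insert v ((S \ A) ∪ B) with hS₁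
    have hcover : ∀ p q, G.Adj p q → p ∈ S → p ∈ S₁ ∨ q ∈ S₁ := by
      intro p q hpq hpS
      by_cases hpS₁ : p ∈ S₁
      · exact Or.inl hpS₁
      have hpA : p ∈ A := by
        by_contra h
        exact hpS₁ (Set.mem_insert_of_mem _ (Or.inl ⟨hpS, h⟩))
      have hpT : p ∉ T := fun hpT => hpS₁ (Set.mem_insert_of_mem _ (Or.inr (hAB p hpA hpT)))
      have hqT : q ∈ T := (hTvc hpq).resolve_left hpT
      by_cases hqv : q = v
      · exact Or.inr (hqv ▸ Set.mem_insert v _)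
      · exact Or.inr (Set.mem_insert_of_mem _ (Or.inr (hABadj p hpA q hpq hqT hqv)))
    have hS₁vc : IsVC G S₁ := by
      intro p q hpq
      rcases hSvc hpq with h | h
      · exact hcover p q hpq h
      · exact (hcover q p hpq.symm h).symm
    have hS₁sub : X' ∪ {v} ⊆ S₁ := by
      rintro z (hz | hz)
      · by_cases hzA : z ∈ A
        · exact Set.mem_insert_of_mem _ (Or.inr (hAB z hzA (hX'T hz)))
        · exact Set.mem_insert_of_mem _ (Or.inl ⟨hX'S hz, hzA⟩)
      · exact hz ▸ Set.mem_insert _ _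
    have hAne : A.Nonempty := by
      rcases Set.eq_empty_or_nonempty A with h | h
      · rw [h, Set.ncard_empty] at hBA
        omega
      · exact h
    have hvSA : v ∉ (S \ A) ∪ B := by
      rintro (⟨hvS', -⟩ | hvB)
      · exact hv hvS'
      · exact (hBT hvB).2 rfl
    have hS₁card : S₁.ncard = ((S \ A) ∪ B).ncard + 1 := Set.ncard_insert_of_notMem hvSA
    have hSAcard : (S \ A).ncard = S.ncard - A.ncard := Set.ncard_diff hAS
    have hAcard_le : A.ncard ≤ S.ncard := Set.ncard_le_ncard hAS
    have hunle : ((S \ A) ∪ B).ncard ≤ (S \ A).ncard + B.ncard := Set.ncard_union_le _ _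
    have hlb : mvc G ≤ S₁.ncard := mvc_le_ncard G hS₁vc
    have hgood₁ : good S₁ := by
      refine ⟨hS₁vc, ?_, hS₁sub⟩
      omega
    have hsub₁ : S \ S₁ ⊆ S \ T := by
      rintro y ⟨hyS, hyS₁⟩
      have hyA : y ∈ A := by
        by_contra h
        exact hyS₁ (Set.mem_insert_of_mem _ (Or.inl ⟨hyS, h⟩))
      exact ⟨hyS, fun hyT => hyS₁ (Set.mem_insert_of_mem _ (Or.inr (hAB y hyA hyT)))⟩
    have hST : S \ S₁ = S \ T :=
      Set.eq_of_subset_of_ncard_le hsub₁ (hmin S₁ hgood₁)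
    have hSAne : (S \ A).Nonempty := ⟨u, hu, hAu⟩
    obtain ⟨p, q, hpq, hpA, hqSA⟩ := exists_cross_of_induce_connected hSconn hAS hAne hSAne
    by_cases hqT : q ∈ T
    · -- q ∈ B ∩ (S \ A) : sharper cardinality bound gives a contradiction
      have hqB : q ∈ B := hABadj p hpA q hpq hqT (fun h => hv (h ▸ hqSA.1))
      have h5 : ((S \ A) ∪ B).ncard = (S \ A).ncard + (B \ (S \ A)).ncard := by
        rw [← Set.union_diff_self]
        exact Set.ncard_union_eq disjoint_sdiff_self_right
      have h6 : (B \ (S \ A)).ncard < B.ncard := by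
        refine lt_of_le_of_lt (Set.ncard_le_ncard ?_) (Set.ncard_diff_singleton_lt_of_mem hqB)
        rintro y ⟨h1, h2⟩
        refine ⟨h1, fun h => ?_⟩
        rw [Set.mem_singleton_iff] at h
        rw [h] at h2
        exact h2 hqSA
      omega
    · have hq : q ∈ S \ S₁ := hST ▸ ⟨hqSA.1, hqT⟩
      exact hq.2 (Set.mem_insert_of_mem _ (Or.inl hqSA))
  -- extract the matching and build the move
  obtain ⟨g, hginj, hgmem⟩ := (Finset.all_card_le_biUnion_card_iff_exists_injective t).mp hhall
  have hg : ∀ a : ι, (g a ∈ T ∧ g a ≠ v) ∧ (a.1 = g a ∨ G.Adj a.1 (g a)) := by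
    intro a
    exact (hmem_t a (g a)).mp (hgmem a)
  set f : V → V := fun w => if h : w ∈ S ∧ w ≠ u then g ⟨w, h⟩ else if w = u then v else w
    with hf
  have hfu : f u = v := by
    rw [hf]
    simp
  have hfw : ∀ w (h : w ∈ S ∧ w ≠ u), f w = g ⟨w, h⟩ := by
    intro w h
    rw [hf]
    simp [h.1, h.2]
  have hmaps : Set.MapsTo f S T := by
    intro w hwS
    by_cases hwu : w = u
    · subst hwu
      rw [hfu]
      exact hvT
    · rw [hfw w ⟨hwS, hwu⟩]
      exact (hg _).1.1
  have hinj : Set.InjOn f S := by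
    intro w1 h1 w2 h2 heq
    by_cases hw1 : w1 = u <;> by_cases hw2 : w2 = u
    · rw [hw1, hw2]
    · subst hw1
      rw [hfu, hfw w2 ⟨h2, hw2⟩] at heq
      exact absurd heq.symm (hg ⟨w2, h2, hw2⟩).1.2
    · subst hw2
      rw [hfu, hfw w1 ⟨h1, hw1⟩] at heq
      exact absurd heq (hg ⟨w1, h1, hw1⟩).1.2
    · rw [hfw w1 ⟨h1, hw1⟩, hfw w2 ⟨h2, hw2⟩] at heq
      have := hginj heq
      exact congrArg Subtype.val this
  have himg : f '' S = T := by
    apply Set.eq_of_subset_of_ncard_le (Set.image_subset_iff.mpr hmaps)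
    rw [Set.ncard_image_of_injOn hinj, hScard, hTcard]
  refine ⟨T, ⟨hTvc, hTcard, hTsub⟩, f, ⟨hmaps, hinj, fun y hy => himg ▸ hy⟩, ?_, hfu⟩
  intro w hwS
  by_cases hwu : w = u
  · subst hwu
    rw [hfu]
    exact Or.inr huv
  · rw [hfw w ⟨hwS, hwu⟩]
    rcases (hg ⟨w, hwS, hwu⟩).2 with h | h
    · exact Or.inl h.symm
    · exact Or.inr h

end EVCAux

end Hall
section Main

open EVC SimpleGraph

variable {V : Type*}

namespace EVCAux

lemma swap_defends [DecidableEq V] {G : SimpleGraph V} {S : Set V} {u v : V}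
    (huv : G.Adj u v) (hu : u ∈ S) (hv : v ∈ S) : Defends G S S u v := by
  have hmaps : Set.MapsTo (Equiv.swap u v) S S := by
    intro w hw
    rcases eq_or_ne w u with rfl | h1
    · rwa [Equiv.swap_apply_left]
    rcases eq_or_ne w v with rfl | h2
    · rwa [Equiv.swap_apply_right]
    · rwa [Equiv.swap_apply_of_ne_of_ne h1 h2]
  refine ⟨Equiv.swap u v, ⟨hmaps, (Equiv.injective _).injOn, ?_⟩, ?_,
    Or.inl ⟨hu, Equiv.swap_apply_left u v⟩⟩
  · intro w hw
    exact ⟨Equiv.swap u v w, hmaps hw, Equiv.swap_apply_self u v w⟩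
  · intro w hw
    rcases eq_or_ne w u with rfl | h1
    · rw [Equiv.swap_apply_left]
      exact Or.inr huv
    rcases eq_or_ne w v with rfl | h2
    · rw [Equiv.swap_apply_right]
      exact Or.inr huv.symm
    · rw [Equiv.swap_apply_of_ne_of_ne h1 h2]
      exact Or.inl rfl

lemma univ_class [Finite V] (G : SimpleGraph V) :
    IsEvcClassOn G ∅ (Set.univ : Set V).ncard {Set.univ} := by
  classical
  refine ⟨⟨_, rfl⟩, ?_, ?_⟩
  · rintro S rfl
    exact ⟨isVC_univ G, Set.empty_subset _, rfl⟩
  · rintro S rfl u v huv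
    exact ⟨Set.univ, rfl, swap_defends huv trivial trivial⟩

lemma mvc_le_evc [Finite V] (G : SimpleGraph V) : mvc G ≤ evc G := by
  have hne : {k | ∃ C : Set (Set V), IsEvcClassOn G ∅ k C}.Nonempty :=
    ⟨(Set.univ : Set V).ncard, {Set.univ}, univ_class G⟩
  show mvc G ≤ sInf {k | ∃ C : Set (Set V), IsEvcClassOn G ∅ k C}
  apply le_csInf hne
  rintro k ⟨C, ⟨S, hS⟩, h2, -⟩
  obtain ⟨hvc, -, hcard⟩ := h2 S hS
  exact hcard ▸ mvc_le_ncard G hvc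

end EVCAux

end Main

open EVC SimpleGraph EVCAux

theorem evc_eq_mvc_characterization' {V : Type*} [Finite V] [Nontrivial V]
    (G : SimpleGraph V) (hconn : G.Connected)
    (hF : ∀ S : Set V, IsVC G S → cutVertices G ⊆ S → S.ncard = mvc G →
      (G.induce S).Connected) :
    evc G = mvc G ↔
      ∀ v : V, v ∉ cutVertices G →
        ∃ S : Set V, IsVC G S ∧ S.ncard = mvc G ∧ cutVertices G ∪ {v} ⊆ S := by
  classical
  constructor
  · -- forward direction
    intro heq v hvX
    have hEmem : evc G ∈ {k | ∃ C : Set (Set V), IsEvcClassOn G ∅ k C} :=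
      Nat.sInf_mem ⟨_, {Set.univ}, univ_class G⟩
    rw [heq] at hEmem
    obtain ⟨C, hCne, hC2, hC3⟩ := hEmem
    have hC2' : ∀ S ∈ C, IsVC G S := fun S hS => (hC2 S hS).1
    obtain ⟨S₀, hS₀⟩ := hCne
    by_cases hvS₀ : v ∈ S₀
    · refine ⟨S₀, (hC2 S₀ hS₀).1, (hC2 S₀ hS₀).2.2, ?_⟩
      rintro z (hz | hz)
      · exact cut_subset_config hconn hC2' hC3 hS₀ (le_of_eq (hC2 S₀ hS₀).2.2) hz
      · exact hz ▸ hvS₀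
    · obtain ⟨u, huv⟩ := exists_adj_self hconn v
      have huS₀ : u ∈ S₀ := ((hC2 S₀ hS₀).1 huv).resolve_right hvS₀
      obtain ⟨S', hS', f, hbij, hmov, hcross⟩ := hC3 S₀ hS₀ u v huv
      have hfu : f u = v := by
        rcases hcross with ⟨-, h⟩ | ⟨hvmem, -⟩
        · exact h
        · exact absurd hvmem hvS₀
      have hvS' : v ∈ S' := by
        rw [← hfu, ← hbij.image_eq]
        exact Set.mem_image_of_mem f huS₀
      refine ⟨S', (hC2 S' hS').1, (hC2 S' hS').2.2, ?_⟩
      rintro z (hz | hz)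
      · exact cut_subset_config hconn hC2' hC3 hS' (le_of_eq (hC2 S' hS').2.2) hz
      · exact hz ▸ hvS'
  · -- backward direction
    intro hRHS
    refine le_antisymm ?_ (mvc_le_evc G)
    show sInf {k | ∃ C : Set (Set V), IsEvcClassOn G ∅ k C} ≤ mvc G
    apply Nat.sInf_le
    refine ⟨{S | IsVC G S ∧ S.ncard = mvc G ∧ cutVertices G ⊆ S}, ?_, ?_, ?_⟩
    · -- nonempty
      obtain ⟨v₀, hv₀⟩ := exists_noncut hconn
      obtain ⟨S, h1, h2, h3⟩ := hRHS v₀ hv₀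
      exact ⟨S, h1, h2, fun z hz => h3 (Set.mem_union_left _ hz)⟩
    · rintro S ⟨h1, h2, -⟩
      exact ⟨h1, Set.empty_subset _, h2⟩
    · rintro S ⟨hSvc, hScard, hSX⟩ u v huv
      have hSconn : (G.induce S).Connected := hF S hSvc hSX hScard
      by_cases hvS : v ∈ S
      · by_cases huS : u ∈ S
        · exact ⟨S, ⟨hSvc, hScard, hSX⟩, swap_defends huv huS hvS⟩
        · -- v ∈ S, u ∉ S : guard at v crosses to u
          have huX : u ∉ cutVertices G := fun h => huS (hSX h)
          obtain ⟨T₀, h1, h2, h3⟩ := hRHS u huX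
          obtain ⟨T, ⟨hTvc, hTcard, hTsub⟩, f, hbij, hmov, hfv⟩ :=
            exists_defense_move hSvc hScard hSconn huv.symm hvS huS hSX ⟨h1, h2, h3⟩
          refine ⟨T, ⟨hTvc, hTcard, fun z hz => hTsub (Set.mem_union_left _ hz)⟩,
            f, hbij, hmov, Or.inr ⟨hvS, hfv⟩⟩
      · -- v ∉ S, hence u ∈ S : guard at u crosses to v
        have huS : u ∈ S := (hSvc huv).resolve_right hvS
        have hvX : v ∉ cutVertices G := fun h => hvS (hSX h)
        obtain ⟨T₀, h1, h2, h3⟩ := hRHS v hvX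
        obtain ⟨T, ⟨hTvc, hTcard, hTsub⟩, f, hbij, hmov, hfu⟩ :=
          exists_defense_move hSvc hScard hSconn huv huS hvS hSX ⟨h1, h2, h3⟩
        refine ⟨T, ⟨hTvc, hTcard, fun z hz => hTsub (Set.mem_union_left _ hz)⟩,
          f, hbij, hmov, Or.inl ⟨huS, hfu⟩⟩

open EVC SimpleGraph

/-- Characterization theorem. If every minimum vertex cover of `G` containing
all cut vertices induces a connected subgraph (class `F`), then `evc G = mvc G` iff every
non-cut vertex `v` lies in a minimum vertex cover containing `X ∪ {v}`, where `X` is the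
set of cut vertices. -/
theorem evc_eq_mvc_characterization {V : Type*} [Finite V] [Nontrivial V]
    (G : SimpleGraph V) (hconn : G.Connected)
    (hF : ∀ S : Set V, IsVC G S → cutVertices G ⊆ S → S.ncard = mvc G →
      (G.induce S).Connected) :
    evc G = mvc G ↔
      ∀ v : V, v ∉ cutVertices G →
        ∃ S : Set V, IsVC G S ∧ S.ncard = mvc G ∧ cutVertices G ∪ {v} ⊆ S := by
  exact evc_eq_mvc_characterization' G hconn hF
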